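/- arXiv:math/0505554 — 2 statements merged into one kernel-verified Lean document; each statement's English description precedes it below -/
import Mathlib

section
/- Let U ⊆ ℝⁿ be open, let A_j, A_j' : U → M_m(ℂ) (j = 1,…,n) be continuous, and let g : U → M_m(ℂ) be differentiable with g(x) invertible for every x ∈ U, such that A_j'(x) = g(x)^{-1} A_j(x) g(x) − i g(x)^{-1} ∂g/∂x_j(x) on U for every j. Let γ : [0,T] → U be continuously differentiable, and let c and c' be the gauge phase factors of A and A' along γ, respectively. Then c'(τ) = g(γ(τ))^{-1} c(τ) g(γ(0)) for all τ ∈ [0,T]. -/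
attribute [local instance] Matrix.frobeniusNormedAddCommGroup Matrix.frobeniusNormedSpace
attribute [local instance] Matrix.frobeniusNormedRing Matrix.frobeniusNormedAlgebra

/-- The pointwise algebraic identity underlying the gauge transformation of the
gauge phase factor ODE. -/
private lemma gauge_perj_aux {m : ℕ} (G Gi Aj Dj C : Matrix (Fin m) (Fin m) ℂ) (r : ℝ)
    (hgg : G * Gi = 1) :
    G * (-Complex.I • ((r:ℂ) • ((Gi * Aj * G - Complex.I • (Gi * Dj)) * C)))
    = -Complex.I • ((r:ℂ) • (Aj * (G * C))) - r • (Dj * C) := by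
  rw [← Complex.coe_smul r (Dj * C)]
  simp only [sub_mul, mul_sub, smul_sub, smul_mul_assoc, mul_smul_comm, smul_smul, mul_assoc]
  simp only [← mul_assoc, hgg, one_mul]
  congr 1
  have : -Complex.I * ↑r * Complex.I = (r:ℂ) := by
    ring_nf
    rw [Complex.I_sq]
    ring
  rw [this]

set_option maxHeartbeats 1000000 in
/-- Transformation of the gauge phase factor under a gauge transformation:
if `A'_j = g⁻¹ A_j g - i g⁻¹ ∂g/∂x_j` on an open set `U` and `γ : [0,T] → U` is a `C¹`
path, then the gauge phase factors `c` of `A` and `c'` of `A'` along `γ` (solutions of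
`i ċ = (γ̇ ⬝ A(γ)) c`, `c 0 = I`) satisfy `c' τ = g(γ τ)⁻¹ * c τ * g(γ 0)`. -/
theorem gauge_phase_factor_gauge_transform (n m : ℕ) (T : ℝ) (hT : 0 < T)
    (U : Set (Fin n → ℝ)) (hU : IsOpen U)
    (A A' : Fin n → (Fin n → ℝ) → Matrix (Fin m) (Fin m) ℂ)
    (hA : ∀ j, ContinuousOn (A j) U) (hA' : ∀ j, ContinuousOn (A' j) U)
    (g : (Fin n → ℝ) → Matrix (Fin m) (Fin m) ℂ)
    (g' : (Fin n → ℝ) → ((Fin n → ℝ) →L[ℝ] Matrix (Fin m) (Fin m) ℂ))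
    (hg : ∀ x ∈ U, HasFDerivAt g (g' x) x)
    (hginv : ∀ x ∈ U, IsUnit (g x))
    (hgauge : ∀ j, ∀ x ∈ U,
      A' j x = (g x)⁻¹ * A j x * g x - Complex.I • ((g x)⁻¹ * g' x (Pi.single j 1)))
    (γ : ℝ → (Fin n → ℝ)) (γd : ℝ → (Fin n → ℝ))
    (hγU : Set.MapsTo γ (Set.Icc 0 T) U)
    (hγ : ∀ τ ∈ Set.Icc (0:ℝ) T, HasDerivWithinAt γ (γd τ) (Set.Icc 0 T) τ)
    (hγd : ContinuousOn γd (Set.Icc 0 T))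
    (c c' : ℝ → Matrix (Fin m) (Fin m) ℂ)
    (hc : ∀ τ ∈ Set.Icc (0:ℝ) T,
      HasDerivWithinAt c
        (-Complex.I • ((∑ j, (γd τ j : ℂ) • A j (γ τ)) * c τ)) (Set.Icc 0 T) τ)
    (hc0 : c 0 = 1)
    (hc' : ∀ τ ∈ Set.Icc (0:ℝ) T,
      HasDerivWithinAt c'
        (-Complex.I • ((∑ j, (γd τ j : ℂ) • A' j (γ τ)) * c' τ)) (Set.Icc 0 T) τ)
    (hc'0 : c' 0 = 1) :
    ∀ τ ∈ Set.Icc (0:ℝ) T, c' τ = (g (γ τ))⁻¹ * c τ * g (γ 0) := by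
  classical
  set M : ℝ → Matrix (Fin m) (Fin m) ℂ := fun τ => ∑ j, (γd τ j : ℂ) • A j (γ τ) with hM
  set d : ℝ → Matrix (Fin m) (Fin m) ℂ := fun τ => g (γ τ) * c' τ * (g (γ 0))⁻¹ with hd
  have h0T : (0:ℝ) ∈ Set.Icc (0:ℝ) T := Set.left_mem_Icc.2 hT.le
  have hdet : ∀ x ∈ U, IsUnit (g x).det := fun x hx =>
    (Matrix.isUnit_iff_isUnit_det _).mp (hginv x hx)
  have hgg : ∀ x ∈ U, g x * (g x)⁻¹ = 1 := fun x hx => Matrix.mul_nonsing_inv _ (hdet x hx)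
  have hgg' : ∀ x ∈ U, (g x)⁻¹ * g x = 1 := fun x hx => Matrix.nonsing_inv_mul _ (hdet x hx)
  -- expansion of the directional derivative
  have hdir : ∀ x (v : Fin n → ℝ), g' x v = ∑ j, v j • g' x (Pi.single j 1) := by
    intro x v
    have hv : v = ∑ j, v j • (Pi.single j 1 : Fin n → ℝ) := by
      ext k
      simp [Finset.sum_apply, Pi.single_apply]
    conv_lhs => rw [hv]
    rw [map_sum]
    exact Finset.sum_congr rfl fun j _ => by rw [map_smul]
  -- the algebraic identity for the derivative of g(γ τ) * c' τ
  have halg : ∀ τ ∈ Set.Icc (0:ℝ) T,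
      g' (γ τ) (γd τ) * c' τ +
        g (γ τ) * (-Complex.I • ((∑ j, (γd τ j : ℂ) • A' j (γ τ)) * c' τ))
      = -Complex.I • (M τ * (g (γ τ) * c' τ)) := by
    intro τ hτ
    have hxU : γ τ ∈ U := hγU hτ
    have h1 : g (γ τ) * (-Complex.I • ((∑ j, (γd τ j : ℂ) • A' j (γ τ)) * c' τ))
        = ∑ j, (-Complex.I • ((γd τ j : ℂ) • (A j (γ τ) * (g (γ τ) * c' τ)))
            - (γd τ j) • (g' (γ τ) (Pi.single j 1) * c' τ)) := by
      rw [Finset.sum_mul]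
      simp_rw [smul_mul_assoc]
      rw [Finset.smul_sum, Finset.mul_sum]
      refine Finset.sum_congr rfl fun j _ => ?_
      rw [hgauge j (γ τ) hxU]
      exact gauge_perj_aux _ _ _ _ _ _ (hgg _ hxU)
    rw [h1, Finset.sum_sub_distrib]
    have h3 : ∑ j, -Complex.I • ((γd τ j : ℂ) • (A j (γ τ) * (g (γ τ) * c' τ)))
        = -Complex.I • (M τ * (g (γ τ) * c' τ)) := by
      rw [hM, Finset.sum_mul, Finset.smul_sum]
      exact Finset.sum_congr rfl fun j _ => by rw [smul_mul_assoc]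
    have h4 : ∑ j, (γd τ j) • (g' (γ τ) (Pi.single j 1) * c' τ)
        = g' (γ τ) (γd τ) * c' τ := by
      rw [hdir (γ τ) (γd τ), Finset.sum_mul]
      exact Finset.sum_congr rfl fun j _ => by rw [smul_mul_assoc]
    rw [h3, h4]
    abel
  -- d satisfies the same ODE as c
  have hkey : ∀ τ ∈ Set.Icc (0:ℝ) T,
      HasDerivWithinAt d (-Complex.I • (M τ * d τ)) (Set.Icc 0 T) τ := by
    intro τ hτ
    have hgd : HasDerivWithinAt (fun s => g (γ s)) (g' (γ τ) (γd τ)) (Set.Icc 0 T) τ :=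
      (hg (γ τ) (hγU hτ)).comp_hasDerivWithinAt τ (hγ τ hτ)
    have hprod := (hgd.mul (hc' τ hτ)).mul_const ((g (γ 0))⁻¹)
    have heq : (g' (γ τ) (γd τ) * c' τ
          + g (γ τ) * (-Complex.I • ((∑ j, (γd τ j : ℂ) • A' j (γ τ)) * c' τ)))
          * (g (γ 0))⁻¹
        = -Complex.I • (M τ * d τ) := by
      rw [halg τ hτ, smul_mul_assoc]
      show -Complex.I • (M τ * (g (γ τ) * c' τ) * (g (γ 0))⁻¹)
        = -Complex.I • (M τ * (g (γ τ) * c' τ * (g (γ 0))⁻¹))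
      rw [mul_assoc, mul_assoc]
    exact heq ▸ hprod
  -- continuity of the coefficient and a Lipschitz bound
  have hγc : ContinuousOn γ (Set.Icc 0 T) := fun τ hτ => (hγ τ hτ).continuousWithinAt
  have hMc : ContinuousOn M (Set.Icc 0 T) := by
    rw [hM]
    apply continuousOn_finset_sum
    intro j _
    exact (Complex.continuous_ofReal.comp_continuousOn
      ((continuous_apply j).comp_continuousOn hγd)).smul ((hA j).comp hγc hγU)
  obtain ⟨C0, hC0⟩ := isCompact_Icc.exists_bound_of_continuousOn hMc
  set K : NNReal := ⟨max C0 0, le_max_right _ _⟩ with hK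
  set v : ℝ → Matrix (Fin m) (Fin m) ℂ → Matrix (Fin m) (Fin m) ℂ :=
    fun t X => if t ∈ Set.Icc (0:ℝ) T then -Complex.I • (M t * X) else 0 with hv
  have hlip : ∀ t, LipschitzWith K (v t) := by
    intro t
    by_cases ht : t ∈ Set.Icc (0:ℝ) T
    · apply LipschitzWith.of_dist_le_mul
      intro X Y
      simp only [hv, if_pos ht]
      rw [dist_eq_norm, dist_eq_norm, ← smul_sub, ← mul_sub]
      calc ‖-Complex.I • (M t * (X - Y))‖ = ‖M t * (X - Y)‖ := by
            rw [norm_smul]; simp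
        _ ≤ ‖M t‖ * ‖X - Y‖ := norm_mul_le _ _
        _ ≤ K * ‖X - Y‖ := by
            apply mul_le_mul_of_nonneg_right _ (norm_nonneg _)
            exact le_trans (hC0 t ht) (le_max_left _ _)
    · apply LipschitzWith.of_dist_le_mul
      intro X Y
      simp only [hv, if_neg ht]
      simp only [dist_self, dist_eq_norm]
      positivity
  -- uniqueness of solutions
  have hdc : ContinuousOn d (Set.Icc 0 T) := fun τ hτ => (hkey τ hτ).continuousWithinAt
  have hcc : ContinuousOn c (Set.Icc 0 T) := fun τ hτ => (hc τ hτ).continuousWithinAt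
  have hd' : ∀ t ∈ Set.Ico (0:ℝ) T, HasDerivWithinAt d (v t (d t)) (Set.Ici t) t := by
    intro t ht
    have := (hkey t (Set.Ico_subset_Icc_self ht)).mono_of_mem_nhdsWithin
      (Icc_mem_nhdsGE_of_mem ht)
    simp only [hv, if_pos (Set.Ico_subset_Icc_self ht)]
    exact this
  have hc'' : ∀ t ∈ Set.Ico (0:ℝ) T, HasDerivWithinAt c (v t (c t)) (Set.Ici t) t := by
    intro t ht
    have := (hc t (Set.Ico_subset_Icc_self ht)).mono_of_mem_nhdsWithin
      (Icc_mem_nhdsGE_of_mem ht)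
    simp only [hv, if_pos (Set.Ico_subset_Icc_self ht)]
    exact this
  have h00 : d 0 = c 0 := by
    show g (γ 0) * c' 0 * (g (γ 0))⁻¹ = c 0
    rw [hc0, hc'0, mul_one, hgg _ (hγU h0T)]
  have huniq : Set.EqOn d c (Set.Icc 0 T) :=
    ODE_solution_unique hlip hdc hd' hcc hc'' h00
  -- conclude
  intro τ hτ
  have hdc2 : g (γ τ) * c' τ * (g (γ 0))⁻¹ = c τ := huniq hτ
  rw [← hdc2]
  rw [mul_assoc, mul_assoc, ← mul_assoc ((g (γ τ))⁻¹), hgg' _ (hγU h0T), mul_one,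
    ← mul_assoc, hgg' _ (hγU hτ), one_mul]
end

section
/- Let U ⊆ ℝⁿ be open, let A_j, A_j' : U → M_m(ℂ) be continuous, and let g : U → M_m(ℂ) be differentiable with invertible values such that A_j' = g^{-1} A_j g − i g^{-1} ∂g/∂x_j on U for every j. Let γ : [0,T] → U be a continuously differentiable closed path with γ(0) = γ(T) = x⁰ and suppose g(x⁰) = I_m. Then the Wu–Yang gauge phase factors of the two potentials around the loop coincide: c'(T) = c(T), where c and c' are the gauge phase factors of A and A' along γ. -/
attribute [local instance] Matrix.frobeniusNormedAddCommGroup Matrix.frobeniusNormedSpace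

section WuYangAux
attribute [local instance] Matrix.frobeniusNormedRing Matrix.frobeniusNormedAlgebra

/-- The Wu–Yang gauge phase factor of a closed loop is invariant under gauge
transformations whose gauge is the identity at the base point: if
`A'_j = g⁻¹ A_j g - i g⁻¹ ∂g/∂x_j` on an open set `U`, `γ` is a `C¹` closed path in `U`
with `γ 0 = γ T = x0` and `g x0 = I`, then the phase factors of `A` and `A'` along `γ`
satisfy `c' T = c T`. -/
theorem wu_yang_phase_factor_gauge_invariant (n m : ℕ) (T : ℝ) (hT : 0 < T)
    (U : Set (Fin n → ℝ)) (hU : IsOpen U)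
    (A A' : Fin n → (Fin n → ℝ) → Matrix (Fin m) (Fin m) ℂ)
    (hA : ∀ j, ContinuousOn (A j) U) (hA' : ∀ j, ContinuousOn (A' j) U)
    (g : (Fin n → ℝ) → Matrix (Fin m) (Fin m) ℂ)
    (g' : (Fin n → ℝ) → ((Fin n → ℝ) →L[ℝ] Matrix (Fin m) (Fin m) ℂ))
    (hg : ∀ x ∈ U, HasFDerivAt g (g' x) x)
    (hginv : ∀ x ∈ U, IsUnit (g x))
    (hgauge : ∀ j, ∀ x ∈ U,
      A' j x = (g x)⁻¹ * A j x * g x - Complex.I • ((g x)⁻¹ * g' x (Pi.single j 1)))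
    (x0 : Fin n → ℝ)
    (γ : ℝ → (Fin n → ℝ)) (γd : ℝ → (Fin n → ℝ))
    (hγU : Set.MapsTo γ (Set.Icc 0 T) U)
    (hγ : ∀ τ ∈ Set.Icc (0:ℝ) T, HasDerivWithinAt γ (γd τ) (Set.Icc 0 T) τ)
    (hγd : ContinuousOn γd (Set.Icc 0 T))
    (hγ0 : γ 0 = x0) (hγT : γ T = x0) (hgx0 : g x0 = 1)
    (c c' : ℝ → Matrix (Fin m) (Fin m) ℂ)
    (hc : ∀ τ ∈ Set.Icc (0:ℝ) T,
      HasDerivWithinAt c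
        (-Complex.I • ((∑ j, (γd τ j : ℂ) • A j (γ τ)) * c τ)) (Set.Icc 0 T) τ)
    (hc0 : c 0 = 1)
    (hc' : ∀ τ ∈ Set.Icc (0:ℝ) T,
      HasDerivWithinAt c'
        (-Complex.I • ((∑ j, (γd τ j : ℂ) • A' j (γ τ)) * c' τ)) (Set.Icc 0 T) τ)
    (hc'0 : c' 0 = 1) :
    c' T = c T := by
  classical
  -- the coefficient matrix of the ODE for `c`
  set M : ℝ → Matrix (Fin m) (Fin m) ℂ := fun t => ∑ j, (γd t j : ℂ) • A j (γ t) with hM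
  -- continuity of γ on [0,T]
  have hγcont : ContinuousOn γ (Set.Icc 0 T) := fun t ht =>
    (hγ t ht).continuousWithinAt
  have hMcont : ContinuousOn M (Set.Icc 0 T) := by
    apply continuousOn_finset_sum
    intro j _
    exact ((Complex.continuous_ofReal.comp_continuousOn
      ((continuous_apply j).comp_continuousOn hγd))).smul
      ((hA j).comp hγcont hγU)
  -- clamp to [0,T]
  set cl : ℝ → ℝ := fun t => min T (max 0 t) with hcl
  have hclmem : ∀ t, cl t ∈ Set.Icc 0 T := fun t =>
    ⟨le_min hT.le (le_max_left _ _), min_le_left _ _⟩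
  have hcleq : ∀ t ∈ Set.Icc (0:ℝ) T, cl t = t := by
    intro t ht
    simp [hcl, max_eq_right ht.1, min_eq_right ht.2]
  have hclcont : Continuous cl := continuous_const.min (continuous_const.max continuous_id)
  -- the (globally defined) vector field
  set v : ℝ → Matrix (Fin m) (Fin m) ℂ → Matrix (Fin m) (Fin m) ℂ :=
    fun t X => -Complex.I • (M (cl t) * X) with hv
  -- Lipschitz bound
  obtain ⟨C, hC⟩ := (isCompact_Icc.image_of_continuousOn hMcont).exists_bound_of_continuousOn
    continuousOn_id
  have hCbound : ∀ t, ‖M (cl t)‖ ≤ C := by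
    intro t
    simpa using hC (M (cl t)) ⟨cl t, hclmem t, rfl⟩
  have hC0 : (0:ℝ) ≤ C := le_trans (norm_nonneg _) (hCbound 0)
  have hlip : ∀ t, LipschitzWith C.toNNReal (v t) := by
    intro t
    apply LipschitzWith.of_dist_le_mul
    intro X Y
    rw [dist_eq_norm]
    have : v t X - v t Y = -Complex.I • (M (cl t) * (X - Y)) := by
      simp [hv, mul_sub, smul_sub]
    rw [this, norm_smul]
    simp only [norm_neg, Complex.norm_I, one_mul]
    calc ‖M (cl t) * (X - Y)‖ ≤ ‖M (cl t)‖ * ‖X - Y‖ := norm_mul_le _ _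
      _ ≤ C * ‖X - Y‖ := by
          gcongr; exact hCbound t
      _ = ↑C.toNNReal * dist X Y := by
          rw [Real.coe_toNNReal _ hC0, dist_eq_norm]
  -- the gauge-transformed solution
  set w : ℝ → Matrix (Fin m) (Fin m) ℂ := fun t => g (γ t) * c' t with hw
  -- derivative of w
  have hwderiv : ∀ τ ∈ Set.Icc (0:ℝ) T,
      HasDerivWithinAt w (-Complex.I • (M τ * w τ)) (Set.Icc 0 T) τ := by
    intro τ hτ
    have hxU : γ τ ∈ U := hγU hτ
    have h1 : HasDerivWithinAt (fun t => g (γ t)) (g' (γ τ) (γd τ)) (Set.Icc 0 T) τ :=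
      (hg (γ τ) hxU).comp_hasDerivWithinAt τ (hγ τ hτ)
    have h2 := (h1.mul (hc' τ hτ))
    refine h2.congr_deriv (Eq.symm ?_)
    -- algebraic identity
    set G := g (γ τ) with hG
    have hdet : IsUnit G.det := (Matrix.isUnit_iff_isUnit_det G).mp (hginv _ hxU)
    have hGG : G * G⁻¹ = 1 := Matrix.mul_nonsing_inv G hdet
    -- g'(γ τ)(γd τ) as a sum
    have hsingle : ∀ j : Fin n, (Pi.single j 1 : Fin n → ℝ) =
        fun k => if j = k then 1 else 0 := by
      intro j; funext k; rw [Pi.single_apply]; simp [eq_comm]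
    have hsum : g' (γ τ) (γd τ) = ∑ j, γd τ j • g' (γ τ) (Pi.single j 1) := by
      conv_lhs => rw [pi_eq_sum_univ (γd τ)]
      rw [map_sum]
      congr 1; funext j
      rw [← hsingle j, map_smul]
    -- G * A' j (γ τ)
    have hkey : ∀ j : Fin n, G * A' j (γ τ) =
        A j (γ τ) * G - Complex.I • g' (γ τ) (Pi.single j 1) := by
      intro j
      rw [hgauge j (γ τ) hxU]
      rw [mul_sub, mul_smul_comm]
      rw [← mul_assoc, ← mul_assoc, hGG, one_mul, ← mul_assoc, hGG, one_mul]
    have hterm : ∀ j : Fin n, (γd τ j : ℂ) • (G * A' j (γ τ)) =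
        ((γd τ j : ℂ) • A j (γ τ)) * G
          - Complex.I • (γd τ j • g' (γ τ) (Pi.single j 1)) := by
      intro j
      rw [hkey j, smul_sub, smul_mul_assoc]
      congr 1
      rw [smul_comm (γd τ j : ℂ) Complex.I, Complex.coe_smul]
    have hGS : G * (∑ j, (γd τ j : ℂ) • A' j (γ τ)) =
        M τ * G - Complex.I • (g' (γ τ) (γd τ)) := by
      calc G * (∑ j, (γd τ j : ℂ) • A' j (γ τ))
          = ∑ j, (γd τ j : ℂ) • (G * A' j (γ τ)) := by
            rw [Finset.mul_sum]
            exact Finset.sum_congr rfl fun j _ => mul_smul_comm _ _ _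
        _ = ∑ j, (((γd τ j : ℂ) • A j (γ τ)) * G
              - Complex.I • (γd τ j • g' (γ τ) (Pi.single j 1))) :=
            Finset.sum_congr rfl fun j _ => hterm j
        _ = (∑ j, (γd τ j : ℂ) • A j (γ τ)) * G
              - Complex.I • ∑ j, γd τ j • g' (γ τ) (Pi.single j 1) := by
            rw [Finset.sum_sub_distrib, Finset.sum_mul, Finset.smul_sum]
        _ = M τ * G - Complex.I • (g' (γ τ) (γd τ)) := by rw [hM, hsum]
    -- now the identity
    show -Complex.I • (M τ * (G * c' τ)) = _
    have hII : -Complex.I * Complex.I = 1 := by simp [Complex.I_mul_I]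
    conv_rhs => rw [mul_smul_comm, ← mul_assoc, hGS, sub_mul, smul_sub,
      smul_mul_assoc, smul_smul, hII, one_smul]
    rw [← mul_assoc]
    abel
  -- continuity of w and c on Icc
  have hwcont : ContinuousOn w (Set.Icc 0 T) := fun t ht =>
    (hwderiv t ht).continuousWithinAt
  have hccont : ContinuousOn c (Set.Icc 0 T) := fun t ht =>
    (hc t ht).continuousWithinAt
  -- uniqueness
  have huniq : Set.EqOn w c (Set.Icc 0 T) := by
    apply ODE_solution_unique_of_mem_Icc_right
      (fun t _ => (hlip t).lipschitzOnWith (s := Set.univ)) hwcont ?_ (fun _ _ => trivial)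
      hccont ?_ (fun _ _ => trivial) ?_
    · intro t ht
      have h := (hwderiv t ⟨ht.1, ht.2.le⟩).mono_of_mem_nhdsWithin
        (Icc_mem_nhdsGE_of_mem ht)
      have : v t (w t) = -Complex.I • (M t * w t) := by
        rw [hv]; simp only
        rw [hcleq t ⟨ht.1, ht.2.le⟩]
      rw [this]
      exact h
    · intro t ht
      have h := (hc t ⟨ht.1, ht.2.le⟩).mono_of_mem_nhdsWithin
        (Icc_mem_nhdsGE_of_mem ht)
      have : v t (c t) = -Complex.I • (M t * c t) := by
        rw [hv]; simp only
        rw [hcleq t ⟨ht.1, ht.2.le⟩]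
      rw [this]
      exact h
    · rw [hw]; simp only
      rw [hγ0, hgx0, hc'0, one_mul, hc0]
  have hend := huniq ⟨hT.le, le_refl T⟩
  rw [hw] at hend
  simp only at hend
  rw [hγT, hgx0, one_mul] at hend
  rw [hend]

end WuYangAux
end
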